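/- For a constant product AMM at staking equilibrium (TVL = f*Vol/r_s, reserves 2x = TVL), the total swap cost f*Δx + (Δx/x)*Δx for a trade of size Δx equals Δx*(f + 2*r_s*Δx/(f*Vol)); this is minimized over the fee tier f > 0 (holding Vol fixed) at f = sqrt(2*r_s*Δx/Vol). -/

import Mathlib

/-- At staking equilibrium `x = f*Vol/(2*rs)`, the total swap cost
`f*Δx + (Δx/x)*Δx` equals `Δx*(f + 2*rs*Δx/(f*Vol))`, and the latter is
minimized over fee tiers `f > 0` at `f = √(2*rs*Δx/Vol)`. -/
theorem stmt_17 (Δx Vol rs : ℝ) (hΔx : 0 < Δx) (hVol : 0 < Vol) (hrs : 0 < rs) :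
    (∀ f : ℝ, 0 < f → ∀ x : ℝ, x = f * Vol / (2 * rs) →
      f * Δx + (Δx / x) * Δx = Δx * (f + 2 * rs * Δx / (f * Vol))) ∧
    IsMinOn (fun f => Δx * (f + 2 * rs * Δx / (f * Vol))) (Set.Ioi 0)
      (Real.sqrt (2 * rs * Δx / Vol)) := by
  constructor
  · intro f hf x hx
    subst hx
    field_simp
  · set c : ℝ := 2 * rs * Δx / Vol with hc
    have hcpos : 0 < c := by positivity
    have hs : 0 < Real.sqrt c := Real.sqrt_pos.mpr hcpos
    have hsq : Real.sqrt c * Real.sqrt c = c := Real.mul_self_sqrt hcpos.le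
    intro f hf
    simp only [Set.mem_Ioi] at hf
    simp only [Set.mem_setOf_eq]
    have h1 : 2 * rs * Δx / (Real.sqrt c * Vol) = Real.sqrt c := by
      rw [show (2:ℝ) * rs * Δx = c * Vol by rw [hc, div_mul_cancel₀ _ hVol.ne']]
      field_simp
      nlinarith
    have h2 : 2 * rs * Δx / (f * Vol) = c / f := by
      rw [show (2:ℝ) * rs * Δx = c * Vol by rw [hc, div_mul_cancel₀ _ hVol.ne']]
      field_simp
    simp only [h1, h2]
    have key : Real.sqrt c + Real.sqrt c ≤ f + c / f := by
      have h3 : c / f * f = c := div_mul_cancel₀ c hf.ne'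
      nlinarith [sq_nonneg (f - Real.sqrt c), mul_pos hf hs]
    nlinarith
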